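/- The set of exponents p > 0 for which a metric space (X,d) satisfies the generalized roundness inequality is an interval containing its infimum behavior: if the inequality holds for exponent q then it holds for every p with 0 < p ≤ q. -/

import Mathlib

/-- A kernel of negative type on `X`. -/
def IsNegTypeKernel {X : Type*} (ψ : X → X → ℝ) : Prop :=
  (∀ x, ψ x x = 0) ∧ (∀ x y, ψ x y = ψ y x) ∧
    ∀ (n : ℕ) (x : Fin n → X) (lam : Fin n → ℝ), (∑ i, lam i = 0) →
      ∑ i : Fin n, ∑ j : Fin n, lam i * lam j * ψ (x i) (x j) ≤ 0

/-- The generalized roundness inequality for exponent `p` on a metric space `X`. -/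
def GRIneq (X : Type*) [MetricSpace X] (p : ℝ) : Prop :=
  ∀ (n : ℕ), 2 ≤ n → ∀ a b : Fin n → X,
    ∑ q ∈ Finset.univ.filter (fun q : Fin n × Fin n => q.1 < q.2),
        (dist (a q.1) (a q.2) ^ p + dist (b q.1) (b q.2) ^ p)
      ≤ ∑ i : Fin n, ∑ j : Fin n, dist (a i) (b j) ^ p

section Aux

open Finset Real

namespace GRAux

/-- Positive semidefinite kernel on `Fin n`. -/
def PSDk {n : ℕ} (K : Fin n → Fin n → ℝ) : Prop :=
  ∀ c : Fin n → ℝ, 0 ≤ ∑ i, ∑ j, c i * c j * K i j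

lemma PSDk.hadamard {n : ℕ} {K L : Fin n → Fin n → ℝ} (hKs : ∀ i j, K i j = K j i)
    (hK : PSDk K) (hL : PSDk L) : PSDk (fun i j => K i j * L i j) := by
  classical
  have hM : (Matrix.of K).PosSemidef := by
    refine Matrix.PosSemidef.of_dotProduct_mulVec_nonneg ?_ ?_
    · ext i j
      simp [Matrix.conjTranspose_apply, hKs i j]
    · intro x
      have := hK x
      simpa [dotProduct, Matrix.mulVec, mul_comm, mul_assoc, mul_left_comm,
        Finset.mul_sum] using this
  open MatrixOrder in obtain ⟨B, hB⟩ := CStarAlgebra.nonneg_iff_eq_star_mul_self.mp hM.nonneg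
  have hKB : ∀ i j, K i j = ∑ k, B k i * B k j := by
    intro i j
    have := congrArg (fun M => M i j) hB
    simpa [Matrix.mul_apply, Matrix.conjTranspose_apply, Matrix.star_eq_conjTranspose] using this
  intro c
  have e1 : ∀ i j : Fin n, c i * c j * (K i j * L i j)
      = ∑ k, (c i * B k i) * (c j * B k j) * L i j := by
    intro i j
    rw [hKB i j]
    rw [Finset.sum_mul, Finset.mul_sum]
    exact Finset.sum_congr rfl fun k _ => by ring
  calc (0:ℝ) ≤ ∑ k, ∑ i, ∑ j, (c i * B k i) * (c j * B k j) * L i j :=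
        Finset.sum_nonneg fun k _ => hL (fun i => c i * B k i)
    _ = ∑ i, ∑ k, ∑ j, (c i * B k i) * (c j * B k j) * L i j := Finset.sum_comm
    _ = ∑ i, ∑ j, c i * c j * (K i j * L i j) := by
        refine Finset.sum_congr rfl fun i _ => ?_
        rw [Finset.sum_comm]
        exact Finset.sum_congr rfl fun j _ => (e1 i j).symm

lemma PSDk.pow {n : ℕ} {K : Fin n → Fin n → ℝ} (hKs : ∀ i j, K i j = K j i)
    (hK : PSDk K) (k : ℕ) : PSDk (fun i j => K i j ^ k) := by
  induction k with
  | zero =>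
      intro c
      have : ∑ i, ∑ j, c i * c j * K i j ^ 0 = (∑ i, c i) ^ 2 := by
        simp only [pow_zero, mul_one, sq, Finset.sum_mul_sum]
      rw [this]; positivity
  | succ m ih =>
      have h := PSDk.hadamard (K := fun i j => K i j ^ m) (L := K)
        (fun i j => by simp [hKs i j]) ih hK
      intro c
      simpa [pow_succ] using h c

lemma PSDk.exp {n : ℕ} {K : Fin n → Fin n → ℝ} (hKs : ∀ i j, K i j = K j i)
    (hK : PSDk K) : PSDk (fun i j => Real.exp (K i j)) := by
  intro c
  have hlim : ∀ i j : Fin n, Filter.Tendsto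
      (fun N => ∑ k ∈ Finset.range N, K i j ^ k / (Nat.factorial k)) Filter.atTop
      (nhds (Real.exp (K i j))) := by
    intro i j
    have h : HasSum (fun k => K i j ^ k / (Nat.factorial k)) (Real.exp (K i j)) := by
      rw [Real.exp_eq_exp_ℝ]
      exact NormedSpace.expSeries_div_hasSum_exp (K i j)
    exact h.tendsto_sum_nat
  have htend : Filter.Tendsto
      (fun N => ∑ i, ∑ j, c i * c j * (∑ k ∈ Finset.range N, K i j ^ k / (Nat.factorial k)))
      Filter.atTop (nhds (∑ i, ∑ j, c i * c j * Real.exp (K i j))) := by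
    refine tendsto_finset_sum _ fun i _ => ?_
    refine tendsto_finset_sum _ fun j _ => ?_
    exact (tendsto_const_nhds.mul (hlim i j))
  refine ge_of_tendsto' htend fun N => ?_
  have e1 : ∑ i, ∑ j, c i * c j * (∑ k ∈ Finset.range N, K i j ^ k / (Nat.factorial k))
      = ∑ k ∈ Finset.range N, ((Nat.factorial k : ℝ))⁻¹ * ∑ i, ∑ j, c i * c j * K i j ^ k := by
    calc ∑ i, ∑ j, c i * c j * (∑ k ∈ Finset.range N, K i j ^ k / (Nat.factorial k))
        = ∑ i, ∑ j, ∑ k ∈ Finset.range N,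
            ((Nat.factorial k : ℝ))⁻¹ * (c i * c j * K i j ^ k) := by
          refine Finset.sum_congr rfl fun i _ => Finset.sum_congr rfl fun j _ => ?_
          rw [Finset.mul_sum]
          exact Finset.sum_congr rfl fun k _ => by ring
      _ = ∑ i : Fin n, ∑ k ∈ Finset.range N, ∑ j : Fin n,
            ((Nat.factorial k : ℝ))⁻¹ * (c i * c j * K i j ^ k) :=
          Finset.sum_congr rfl fun i _ => Finset.sum_comm
      _ = ∑ k ∈ Finset.range N, ∑ i : Fin n, ∑ j : Fin n,
            ((Nat.factorial k : ℝ))⁻¹ * (c i * c j * K i j ^ k) := Finset.sum_comm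
      _ = ∑ k ∈ Finset.range N, ((Nat.factorial k : ℝ))⁻¹ * ∑ i, ∑ j, c i * c j * K i j ^ k := by
          refine Finset.sum_congr rfl fun k _ => ?_
          rw [Finset.mul_sum]
          exact Finset.sum_congr rfl fun i _ => by rw [Finset.mul_sum]
  rw [e1]
  refine Finset.sum_nonneg fun k _ => mul_nonneg (by positivity) ?_
  exact (PSDk.pow hKs hK k) c


def IsNegTypeKernel' {X : Type*} (ψ : X → X → ℝ) : Prop :=
  (∀ x, ψ x x = 0) ∧ (∀ x y, ψ x y = ψ y x) ∧
    ∀ (n : ℕ) (x : Fin n → X) (lam : Fin n → ℝ), (∑ i, lam i = 0) →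
      ∑ i : Fin n, ∑ j : Fin n, lam i * lam j * ψ (x i) (x j) ≤ 0

lemma negtype_exp_psd {X : Type*} {ψ : X → X → ℝ} (h : IsNegTypeKernel' ψ)
    {n : ℕ} (x : Fin n → X) {s : ℝ} (hs : 0 ≤ s) :
    PSDk (fun i j => Real.exp (-(s * ψ (x i) (x j)))) := by
  obtain ⟨hdiag, hsymm, hq⟩ := h
  rcases Nat.eq_zero_or_pos n with rfl | hn
  · intro c; simp
  set z : X := x ⟨0, hn⟩ with hz
  set φ : Fin n → Fin n → ℝ := fun i j => ψ (x i) z + ψ (x j) z - ψ (x i) (x j) with hφdef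
  have hφsymm : ∀ i j, φ i j = φ j i := by
    intro i j; simp only [hφdef]; rw [hsymm (x i) (x j)]; ring
  have hφ : PSDk φ := by
    intro c
    set S := ∑ i, c i with hS
    set T := ∑ i, c i * ψ (x i) z with hT
    set μ : Fin (n+1) → ℝ := Fin.cons (-S) c with hμ
    set y : Fin (n+1) → X := Fin.cons z x with hy
    have hineq := hq (n+1) y μ (by
      rw [hμ, Fin.sum_cons, hS]; ring)
    have expand : ∑ u : Fin (n+1), ∑ v : Fin (n+1), μ u * μ v * ψ (y u) (y v)
        = (∑ i, ∑ j, c i * c j * ψ (x i) (x j)) - 2 * S * T := by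
      rw [hμ, hy]
      rw [Fin.sum_univ_succ]
      simp only [Fin.cons_zero, Fin.cons_succ]
      rw [Fin.sum_univ_succ]
      simp only [Fin.cons_zero, Fin.cons_succ]
      rw [hdiag z]
      have e1 : ∑ i : Fin n, -S * c i * ψ z (x i) = -S * T := by
        rw [hT, Finset.mul_sum]
        exact Finset.sum_congr rfl fun i _ => by rw [hsymm z (x i)]; ring
      rw [e1]
      have e3 : ∑ i : Fin n, ∑ v : Fin (n+1),
          c i * (Fin.cons (-S) c : Fin (n+1) → ℝ) v * ψ (x i) ((Fin.cons z x : Fin (n+1) → X) v)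
          = (∑ i, ∑ j, c i * c j * ψ (x i) (x j)) - S * T := by
        have : ∀ i : Fin n, ∑ v : Fin (n+1),
            c i * (Fin.cons (-S) c : Fin (n+1) → ℝ) v * ψ (x i) ((Fin.cons z x : Fin (n+1) → X) v)
            = (c i * -S * ψ (x i) z) + ∑ j, c i * c j * ψ (x i) (x j) := by
          intro i
          rw [Fin.sum_univ_succ]
          simp only [Fin.cons_zero, Fin.cons_succ]
        rw [Finset.sum_congr rfl fun i _ => this i, Finset.sum_add_distrib]
        have e4 : ∑ i : Fin n, c i * -S * ψ (x i) z = -(S * T) := by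
          calc ∑ i : Fin n, c i * -S * ψ (x i) z
              = ∑ i : Fin n, (-S) * (c i * ψ (x i) z) :=
                Finset.sum_congr rfl fun i _ => by ring
            _ = (-S) * ∑ i : Fin n, c i * ψ (x i) z := (Finset.mul_sum _ _ _).symm
            _ = -(S * T) := by rw [← hT]; ring
        rw [e4]; ring
      rw [e3]; ring
    rw [expand] at hineq
    have eφ : ∑ i, ∑ j, c i * c j * φ i j
        = 2 * S * T - ∑ i, ∑ j, c i * c j * ψ (x i) (x j) := by
      have : ∀ i : Fin n, ∑ j, c i * c j * φ i j
          = c i * ψ (x i) z * S + c i * T - ∑ j, c i * c j * ψ (x i) (x j) := by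
        intro i
        have : ∀ j : Fin n, c i * c j * φ i j
            = c i * ψ (x i) z * c j + c i * (c j * ψ (x j) z)
              - c i * c j * ψ (x i) (x j) := fun j => by simp only [hφdef]; ring
        rw [Finset.sum_congr rfl fun j _ => this j]
        rw [Finset.sum_sub_distrib, Finset.sum_add_distrib, ← Finset.mul_sum,
          ← Finset.mul_sum, ← hS, ← hT]
      rw [Finset.sum_congr rfl fun i _ => this i, Finset.sum_sub_distrib,
        Finset.sum_add_distrib, ← Finset.sum_mul, ← Finset.sum_mul, ← hT, ← hS]
      ring
    rw [eφ]
    linarith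
  -- now the exponential step
  have hsφ : PSDk (fun i j => s * φ i j) := by
    intro c
    have : ∑ i, ∑ j, c i * c j * (s * φ i j) = s * ∑ i, ∑ j, c i * c j * φ i j := by
      rw [Finset.mul_sum]
      refine Finset.sum_congr rfl fun i _ => ?_
      rw [Finset.mul_sum]
      exact Finset.sum_congr rfl fun j _ => by ring
    rw [this]
    exact mul_nonneg hs (hφ c)
  have hexp : PSDk (fun i j => Real.exp (s * φ i j)) :=
    PSDk.exp (fun i j => by rw [hφsymm i j]) hsφ
  intro c
  have key := hexp (fun i => c i * Real.exp (-(s * ψ (x i) z)))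
  calc (0:ℝ) ≤ ∑ i, ∑ j, (c i * Real.exp (-(s * ψ (x i) z)))
        * (c j * Real.exp (-(s * ψ (x j) z))) * Real.exp (s * φ i j) := key
    _ = ∑ i, ∑ j, c i * c j * Real.exp (-(s * ψ (x i) (x j))) := by
      refine Finset.sum_congr rfl fun i _ => Finset.sum_congr rfl fun j _ => ?_
      have : -(s * ψ (x i) (x j)) = -(s * ψ (x i) z) + -(s * ψ (x j) z) + s * φ i j := by
        simp only [hφdef]; ring
      rw [this, Real.exp_add, Real.exp_add]
      ring


lemma two_mul_sum_pairs {n : ℕ} (g : Fin n → Fin n → ℝ)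
    (hsym : ∀ i j, g i j = g j i) (hdiag : ∀ i, g i i = 0) :
    2 * ∑ q ∈ Finset.univ.filter (fun q : Fin n × Fin n => q.1 < q.2), g q.1 q.2
      = ∑ i, ∑ j, g i j := by
  classical
  have htot : ∑ i, ∑ j, g i j = ∑ q : Fin n × Fin n, g q.1 q.2 := by
    rw [Fintype.sum_prod_type]
  have hsplit := Finset.sum_filter_add_sum_filter_not Finset.univ
    (fun q : Fin n × Fin n => q.1 < q.2) (fun q => g q.1 q.2)
  have hsplit2 := Finset.sum_filter_add_sum_filter_not
    (Finset.univ.filter (fun q : Fin n × Fin n => ¬ q.1 < q.2))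
    (fun q : Fin n × Fin n => q.2 < q.1) (fun q => g q.1 q.2)
  have hdiagsum : ∑ q ∈ (Finset.univ.filter (fun q : Fin n × Fin n => ¬ q.1 < q.2)).filter
      (fun q : Fin n × Fin n => ¬ q.2 < q.1), g q.1 q.2 = 0 := by
    refine Finset.sum_eq_zero fun q hq => ?_
    simp only [Finset.mem_filter] at hq
    have : q.1 = q.2 := le_antisymm (not_lt.1 hq.2) (not_lt.1 hq.1.2)
    rw [this]; exact hdiag q.2
  have hgt : ∑ q ∈ (Finset.univ.filter (fun q : Fin n × Fin n => ¬ q.1 < q.2)).filter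
      (fun q : Fin n × Fin n => q.2 < q.1), g q.1 q.2
      = ∑ q ∈ Finset.univ.filter (fun q : Fin n × Fin n => q.1 < q.2), g q.1 q.2 := by
    rw [Finset.filter_filter]
    refine Finset.sum_nbij' Prod.swap Prod.swap ?_ ?_ ?_ ?_ ?_
    · intro q hq
      simp only [Finset.mem_filter, Finset.mem_univ, true_and] at hq ⊢
      exact hq.2
    · intro q hq
      simp only [Finset.mem_filter, Finset.mem_univ, true_and] at hq ⊢
      exact ⟨lt_asymm hq, hq⟩
    · intro q _; rfl
    · intro q _; rfl
    · intro q _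
      exact hsym q.1 q.2
  rw [htot, ← hsplit, ← hsplit2, hdiagsum, hgt]
  ring

def GRIneq' (X : Type*) [MetricSpace X] (p : ℝ) : Prop :=
  ∀ (n : ℕ), 2 ≤ n → ∀ a b : Fin n → X,
    ∑ q ∈ Finset.univ.filter (fun q : Fin n × Fin n => q.1 < q.2),
        (dist (a q.1) (a q.2) ^ p + dist (b q.1) (b q.2) ^ p)
      ≤ ∑ i : Fin n, ∑ j : Fin n, dist (a i) (b j) ^ p

lemma negtype_to_GR {X : Type*} [MetricSpace X] {p : ℝ} (hp : 0 < p)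
    (h : IsNegTypeKernel' (fun x y : X => dist x y ^ p)) : GRIneq' X p := by
  intro n _hn a b
  obtain ⟨_, _, hq⟩ := h
  have key := hq (n+n) (Fin.append a b)
    (Fin.append (fun _ => (1:ℝ)) (fun _ => -1)) (by
      rw [Fin.sum_univ_add]
      simp only [Fin.append_left, Fin.append_right]
      simp)
  set Saa := ∑ i : Fin n, ∑ j : Fin n, dist (a i) (a j) ^ p with hSaa
  set Sbb := ∑ i : Fin n, ∑ j : Fin n, dist (b i) (b j) ^ p with hSbb
  set Sab := ∑ i : Fin n, ∑ j : Fin n, dist (a i) (b j) ^ p with hSab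
  have hba : ∑ i : Fin n, ∑ j : Fin n, dist (b i) (a j) ^ p = Sab := by
    rw [Finset.sum_comm, hSab]
    exact Finset.sum_congr rfl fun i _ => Finset.sum_congr rfl fun j _ => by
      rw [dist_comm]
  have hkey2 : Saa + Sbb - 2 * Sab ≤ 0 := by
    have expand : ∑ u : Fin (n+n), ∑ v : Fin (n+n),
        Fin.append (fun _ => (1:ℝ)) (fun _ => -1) u *
          Fin.append (fun _ => (1:ℝ)) (fun _ => -1) v *
          dist (Fin.append a b u) (Fin.append a b v) ^ p
        = Saa + Sbb - 2 * Sab := by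
      rw [Fin.sum_univ_add]
      have left_eq : ∀ i : Fin n, ∑ v : Fin (n+n),
          Fin.append (fun _ => (1:ℝ)) (fun _ => -1) (Fin.castAdd n i) *
            Fin.append (fun _ => (1:ℝ)) (fun _ => -1) v *
            dist (Fin.append a b (Fin.castAdd n i)) (Fin.append a b v) ^ p
          = (∑ j : Fin n, dist (a i) (a j) ^ p) - ∑ j : Fin n, dist (a i) (b j) ^ p := by
        intro i
        rw [Fin.sum_univ_add]
        simp only [Fin.append_left, Fin.append_right, one_mul, mul_one, neg_one_mul,
          mul_neg, neg_mul]
        rw [Finset.sum_neg_distrib, ← sub_eq_add_neg]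
      have right_eq : ∀ i : Fin n, ∑ v : Fin (n+n),
          Fin.append (fun _ => (1:ℝ)) (fun _ => -1) (Fin.natAdd n i) *
            Fin.append (fun _ => (1:ℝ)) (fun _ => -1) v *
            dist (Fin.append a b (Fin.natAdd n i)) (Fin.append a b v) ^ p
          = (∑ j : Fin n, dist (b i) (b j) ^ p) - ∑ j : Fin n, dist (b i) (a j) ^ p := by
        intro i
        rw [Fin.sum_univ_add]
        simp only [Fin.append_left, Fin.append_right, one_mul, mul_one, neg_one_mul,
          mul_neg, neg_mul, neg_neg]
        rw [Finset.sum_neg_distrib, neg_add_eq_sub]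
      rw [Finset.sum_congr rfl fun i _ => left_eq i,
        Finset.sum_congr rfl fun i _ => right_eq i,
        Finset.sum_sub_distrib, Finset.sum_sub_distrib, hba, ← hSaa, ← hSbb, ← hSab]
      ring
    rw [expand] at key
    exact key
  have hpair := two_mul_sum_pairs
    (fun i j => dist (a i) (a j) ^ p + dist (b i) (b j) ^ p)
    (fun i j => by
      show dist (a i) (a j) ^ p + dist (b i) (b j) ^ p
          = dist (a j) (a i) ^ p + dist (b j) (b i) ^ p
      rw [dist_comm (a i), dist_comm (b i)])
    (fun i => by
      show dist (a i) (a i) ^ p + dist (b i) (b i) ^ p = 0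
      simp [Real.zero_rpow hp.ne'])
  have hpairsum : ∑ i : Fin n, ∑ j : Fin n,
      (dist (a i) (a j) ^ p + dist (b i) (b j) ^ p) = Saa + Sbb := by
    rw [hSaa, hSbb, ← Finset.sum_add_distrib]
    exact Finset.sum_congr rfl fun i _ => Finset.sum_add_distrib
  rw [hpairsum] at hpair
  linarith


lemma sum_comp_fiber {n N : ℕ} {m : Fin n → ℕ} (e : (Σ i : Fin n, Fin (m i)) ≃ Fin N)
    (F : Fin n → ℝ) : ∑ u : Fin N, F (e.symm u).1 = ∑ i, (m i : ℝ) * F i := by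
  rw [← Equiv.sum_comp e (fun u => F (e.symm u).1)]
  simp only [Equiv.symm_apply_apply]
  rw [← Finset.univ_sigma_univ, Finset.sum_sigma]
  simp [Finset.sum_const, Finset.card_univ, mul_comm]

lemma GR_to_negtype_int {X : Type*} [MetricSpace X] {q : ℝ} (hq : 0 < q)
    (hGR : GRIneq' X q) (n : ℕ) (x : Fin n → X) (lam : Fin n → ℤ)
    (hsum : ∑ i, lam i = 0) :
    ∑ i, ∑ j, (lam i : ℝ) * (lam j : ℝ) * dist (x i) (x j) ^ q ≤ 0 := by
  classical
  rcases Nat.eq_zero_or_pos n with rfl | hn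
  · simp
  obtain ⟨mA, hmA⟩ : ∃ f : Fin n → ℕ, f = fun i => (lam i).toNat + 2 := ⟨_, rfl⟩
  obtain ⟨mB, hmB⟩ : ∃ f : Fin n → ℕ, f = fun i => (-lam i).toNat + 2 := ⟨_, rfl⟩
  have h2 : ∀ i, (mA i : ℤ) - (mB i : ℤ) = lam i := by
    intro i; rw [hmA, hmB]; push_cast; omega
  have hlam : ∀ i, (lam i : ℝ) = (mA i : ℝ) - (mB i : ℝ) := by
    intro i
    have hz := congrArg (Int.cast : ℤ → ℝ) (h2 i)
    push_cast at hz
    linarith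
  set N := ∑ i, mA i with hN
  have hNB : ∑ i, mB i = N := by
    have h1 : ∑ i, ((mA i : ℤ) - (mB i : ℤ)) = 0 := by
      rw [Finset.sum_congr rfl fun i _ => h2 i]; exact hsum
    rw [Finset.sum_sub_distrib] at h1
    have h3 : ((∑ i, mB i : ℕ) : ℤ) = ((∑ i, mA i : ℕ) : ℤ) := by push_cast at h1 ⊢; linarith
    have h4 : ((∑ i, mA i : ℕ) : ℤ) = (N : ℤ) := by rw [hN]
    exact_mod_cast h3.trans h4
  have hN2 : 2 ≤ N := by
    have h5 : n * 2 ≤ N := by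
      rw [hN]
      calc n * 2 = ∑ _i : Fin n, 2 := by simp [Finset.sum_const, mul_comm]
        _ ≤ ∑ i, mA i := Finset.sum_le_sum fun i _ => by simp only [hmA]; omega
    omega
  have cardA : Fintype.card (Σ i : Fin n, Fin (mA i)) = N := by simp [hN]
  have cardB : Fintype.card (Σ i : Fin n, Fin (mB i)) = N := by simp [hNB]
  set eA := Fintype.equivFinOfCardEq cardA with heA
  set eB := Fintype.equivFinOfCardEq cardB with heB
  set a : Fin N → X := fun u => x (eA.symm u).1 with ha
  set b : Fin N → X := fun u => x (eB.symm u).1 with hb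
  have hGRn := hGR N hN2 a b
  set ψ := fun y z : X => dist y z ^ q with hψ
  have hψd : ∀ y, ψ y y = 0 := fun y => by simp [hψ, Real.zero_rpow hq.ne']
  have hψs : ∀ y z, ψ y z = ψ z y := fun y z => by simp [hψ, dist_comm]
  -- convert double sums over Fin N into weighted sums
  have hSaa : ∑ u : Fin N, ∑ v : Fin N, ψ (a u) (a v)
      = ∑ i, (mA i : ℝ) * ∑ j, (mA j : ℝ) * ψ (x i) (x j) := by
    rw [Finset.sum_congr rfl fun u _ => sum_comp_fiber eA (fun j => ψ (a u) (x j))]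
    exact sum_comp_fiber eA (fun i => ∑ j, (mA j : ℝ) * ψ (x i) (x j))
  have hSbb : ∑ u : Fin N, ∑ v : Fin N, ψ (b u) (b v)
      = ∑ i, (mB i : ℝ) * ∑ j, (mB j : ℝ) * ψ (x i) (x j) := by
    rw [Finset.sum_congr rfl fun u _ => sum_comp_fiber eB (fun j => ψ (b u) (x j))]
    exact sum_comp_fiber eB (fun i => ∑ j, (mB j : ℝ) * ψ (x i) (x j))
  have hSab : ∑ u : Fin N, ∑ v : Fin N, ψ (a u) (b v)
      = ∑ i, (mA i : ℝ) * ∑ j, (mB j : ℝ) * ψ (x i) (x j) := by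
    rw [Finset.sum_congr rfl fun u _ => sum_comp_fiber eB (fun j => ψ (a u) (x j))]
    exact sum_comp_fiber eA (fun i => ∑ j, (mB j : ℝ) * ψ (x i) (x j))
  have hswap : ∑ i, (mB i : ℝ) * ∑ j, (mA j : ℝ) * ψ (x i) (x j)
      = ∑ i, (mA i : ℝ) * ∑ j, (mB j : ℝ) * ψ (x i) (x j) := by
    have e1 : ∀ i, (mB i : ℝ) * ∑ j, (mA j : ℝ) * ψ (x i) (x j)
        = ∑ j, (mA j : ℝ) * ((mB i : ℝ) * ψ (x j) (x i)) := by
      intro i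
      rw [Finset.mul_sum]
      exact Finset.sum_congr rfl fun j _ => by rw [hψs (x i) (x j)]; ring
    rw [Finset.sum_congr rfl fun i _ => e1 i, Finset.sum_comm]
    exact Finset.sum_congr rfl fun i _ => by rw [← Finset.mul_sum]
  -- the GR inequality in weighted form
  have hpair := two_mul_sum_pairs (fun u v : Fin N => ψ (a u) (a v) + ψ (b u) (b v))
    (fun u v => by
      show ψ (a u) (a v) + ψ (b u) (b v) = ψ (a v) (a u) + ψ (b v) (b u)
      rw [hψs (a u), hψs (b u)])
    (fun u => by
      show ψ (a u) (a u) + ψ (b u) (b u) = 0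
      rw [hψd, hψd]; ring)
  have hpairsum : ∑ u : Fin N, ∑ v : Fin N, (ψ (a u) (a v) + ψ (b u) (b v))
      = (∑ u : Fin N, ∑ v : Fin N, ψ (a u) (a v))
        + ∑ u : Fin N, ∑ v : Fin N, ψ (b u) (b v) := by
    rw [← Finset.sum_add_distrib]
    exact Finset.sum_congr rfl fun u _ => Finset.sum_add_distrib
  have hineq : (∑ u : Fin N, ∑ v : Fin N, ψ (a u) (a v))
      + (∑ u : Fin N, ∑ v : Fin N, ψ (b u) (b v))
      ≤ 2 * ∑ u : Fin N, ∑ v : Fin N, ψ (a u) (b v) := by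
    have := hGRn
    rw [← hpairsum, ← hpair] at *
    linarith [hGRn]
  rw [hSaa, hSbb, hSab] at hineq
  -- expand the target quadratic form
  have target : ∑ i, ∑ j, (lam i : ℝ) * (lam j : ℝ) * ψ (x i) (x j)
      = (∑ i, (mA i : ℝ) * ∑ j, (mA j : ℝ) * ψ (x i) (x j))
        + (∑ i, (mB i : ℝ) * ∑ j, (mB j : ℝ) * ψ (x i) (x j))
        - 2 * ∑ i, (mA i : ℝ) * ∑ j, (mB j : ℝ) * ψ (x i) (x j) := by
    have inner : ∀ i, ∑ j, (lam i : ℝ) * (lam j : ℝ) * ψ (x i) (x j)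
        = (mA i : ℝ) * (∑ j, (mA j : ℝ) * ψ (x i) (x j))
          - (mA i : ℝ) * (∑ j, (mB j : ℝ) * ψ (x i) (x j))
          - (mB i : ℝ) * (∑ j, (mA j : ℝ) * ψ (x i) (x j))
          + (mB i : ℝ) * (∑ j, (mB j : ℝ) * ψ (x i) (x j)) := by
      intro i
      simp only [Finset.mul_sum, ← Finset.sum_sub_distrib, ← Finset.sum_add_distrib]
      refine Finset.sum_congr rfl fun j _ => ?_
      rw [hlam i, hlam j]; ring
    rw [Finset.sum_congr rfl fun i _ => inner i]
    simp only [Finset.sum_sub_distrib, Finset.sum_add_distrib]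
    rw [hswap]
    ring
  rw [target]
  linarith


lemma floor_mul_div_tendsto (r : ℝ) :
    Filter.Tendsto (fun k : ℕ => ((⌊(k:ℝ) * r⌋ : ℝ) / k)) Filter.atTop (nhds r) := by
  have hup : ∀ᶠ k : ℕ in Filter.atTop, (⌊(k:ℝ) * r⌋ : ℝ) / k ≤ r := by
    filter_upwards [Filter.eventually_ge_atTop 1] with k hk
    have hkpos : (0:ℝ) < k := by exact_mod_cast hk
    rw [div_le_iff₀ hkpos]
    calc ((⌊(k:ℝ) * r⌋ : ℝ)) ≤ (k:ℝ) * r := Int.floor_le _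
      _ = r * k := by ring
  have hlo : ∀ᶠ k : ℕ in Filter.atTop, r - 1 / k ≤ (⌊(k:ℝ) * r⌋ : ℝ) / k := by
    filter_upwards [Filter.eventually_ge_atTop 1] with k hk
    have hkpos : (0:ℝ) < k := by exact_mod_cast hk
    rw [le_div_iff₀ hkpos]
    have hfl := Int.sub_one_lt_floor ((k:ℝ) * r)
    have he : (r - 1/(k:ℝ)) * k = (k:ℝ) * r - 1 := by field_simp
    rw [he]
    linarith
  have hgl : Filter.Tendsto (fun k : ℕ => r - 1 / k) Filter.atTop (nhds r) := by
    have h1 := tendsto_one_div_atTop_nhds_zero_nat (𝕜 := ℝ)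
    have h2 : Filter.Tendsto (fun _ : ℕ => r) Filter.atTop (nhds r) := tendsto_const_nhds
    simpa using h2.sub h1
  exact tendsto_of_tendsto_of_tendsto_of_le_of_le' hgl tendsto_const_nhds hlo hup

lemma GR_to_negtype {X : Type*} [MetricSpace X] {q : ℝ} (hq : 0 < q) (hGR : GRIneq' X q) :
    IsNegTypeKernel' (fun x y : X => dist x y ^ q) := by
  refine ⟨fun x => by simp [Real.zero_rpow hq.ne'], fun x y => by simp [dist_comm], ?_⟩
  intro n x lam hsum
  rcases Nat.eq_zero_or_pos n with rfl | hn
  · simp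
  set ψ := fun y z : X => dist y z ^ q with hψ
  set i0 : Fin n := ⟨0, hn⟩ with hi0
  obtain ⟨L, hL⟩ : ∃ L : ℕ → Fin n → ℤ, L = fun (k : ℕ) (i : Fin n) =>
      if i = i0 then - ∑ j ∈ Finset.univ.erase i0, ⌊(k:ℝ) * lam j⌋
      else ⌊(k:ℝ) * lam i⌋ := ⟨_, rfl⟩
  have e0 : ∀ k : ℕ, L k i0 = - ∑ j ∈ Finset.univ.erase i0, ⌊(k:ℝ) * lam j⌋ := by
    intro k; simp [hL]
  have ej : ∀ (k : ℕ) (j : Fin n), j ∈ Finset.univ.erase i0 →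
      L k j = ⌊(k:ℝ) * lam j⌋ := by
    intro k j hj; simp [hL, Finset.ne_of_mem_erase hj]
  have hLsum : ∀ k, ∑ i, L k i = 0 := by
    intro k
    rw [← Finset.add_sum_erase _ _ (Finset.mem_univ i0), e0 k,
      Finset.sum_congr rfl (ej k)]
    ring
  obtain ⟨c, hc⟩ : ∃ c : ℕ → Fin n → ℝ, c = fun (k : ℕ) (i : Fin n) =>
      (L k i : ℝ) / k := ⟨_, rfl⟩
  have htend : ∀ i, Filter.Tendsto (fun k => c k i) Filter.atTop (nhds (lam i)) := by
    intro i
    by_cases hii : i = i0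
    · rw [hii]
      have hrw : ∀ k : ℕ, c k i0
          = - ∑ j ∈ Finset.univ.erase i0, ((⌊(k:ℝ) * lam j⌋ : ℝ) / k) := by
        intro k
        simp only [hc]
        rw [e0 k]
        push_cast
        rw [neg_div, Finset.sum_div]
      rw [funext hrw]
      have hsum' : lam i0 = - ∑ j ∈ Finset.univ.erase i0, lam j := by
        have h6 := Finset.add_sum_erase Finset.univ lam (Finset.mem_univ i0)
        rw [hsum] at h6
        linarith
      rw [hsum']
      exact (tendsto_finset_sum _ fun j _ => floor_mul_div_tendsto (lam j)).neg
    · have hrw : ∀ k : ℕ, c k i = (⌊(k:ℝ) * lam i⌋ : ℝ) / k := by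
        intro k
        simp only [hc]
        rw [show L k i = ⌊(k:ℝ) * lam i⌋ from by simp [hL, hii]]
      rw [funext hrw]
      exact floor_mul_div_tendsto (lam i)
  have hform : ∀ k : ℕ, ∑ i, ∑ j, c k i * c k j * ψ (x i) (x j) ≤ 0 := by
    intro k
    have hint := GR_to_negtype_int hq hGR n x (L k) (hLsum k)
    have he : ∑ i, ∑ j, c k i * c k j * ψ (x i) (x j)
        = ((k:ℝ))⁻¹ * (((k:ℝ))⁻¹ * ∑ i, ∑ j, (L k i : ℝ) * (L k j : ℝ) * ψ (x i) (x j)) := by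
      simp only [Finset.mul_sum]
      refine Finset.sum_congr rfl fun i _ => Finset.sum_congr rfl fun j _ => ?_
      simp only [hc]
      ring
    rw [he]
    have h1 : (0:ℝ) ≤ ((k:ℝ))⁻¹ := by positivity
    have h2 : ((k:ℝ))⁻¹ * ∑ i, ∑ j, (L k i : ℝ) * (L k j : ℝ) * ψ (x i) (x j) ≤ 0 :=
      mul_nonpos_iff.2 (Or.inl ⟨h1, hint⟩)
    exact mul_nonpos_iff.2 (Or.inl ⟨h1, h2⟩)
  have htendform : Filter.Tendsto (fun k => ∑ i, ∑ j, c k i * c k j * ψ (x i) (x j))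
      Filter.atTop (nhds (∑ i, ∑ j, lam i * lam j * ψ (x i) (x j))) := by
    refine tendsto_finset_sum _ fun i _ => tendsto_finset_sum _ fun j _ => ?_
    exact ((htend i).mul (htend j)).mul tendsto_const_nhds
  exact le_of_tendsto htendform (Filter.Eventually.of_forall hform)


open MeasureTheory in
lemma integrable_kernel {α : ℝ} (h0 : 0 < α) (h1 : α < 1) {t : ℝ} (ht : 0 ≤ t) :
    IntegrableOn (fun s => (1 - Real.exp (-(s*t))) * s ^ (-α-1)) (Set.Ioi (0:ℝ)) := by
  have hmeas : ∀ (c d : ℝ), 0 ≤ c → AEStronglyMeasurable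
      (fun s => (1 - Real.exp (-(s*t))) * s ^ (-α-1)) (volume.restrict (Set.Ioc c d)) ∧
      AEStronglyMeasurable
      (fun s => (1 - Real.exp (-(s*t))) * s ^ (-α-1)) (volume.restrict (Set.Ioi c)) := by
    intro c d hc
    have hcont : ContinuousOn (fun s : ℝ => (1 - Real.exp (-(s*t))) * s ^ (-α-1))
        (Set.Ioi (0:ℝ)) := by
      refine ContinuousOn.mul ?_ ?_
      · exact (Continuous.sub continuous_const
          ((Real.continuous_exp.comp ((continuous_id.mul continuous_const).neg)))).continuousOn
      · intro s hs
        exact (Real.continuousAt_rpow_const s (-α-1)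
          (Or.inl (ne_of_gt hs))).continuousWithinAt
    constructor
    · exact (hcont.mono (fun y hy => lt_of_le_of_lt hc hy.1 : Set.Ioc c d ⊆ Set.Ioi 0)).aestronglyMeasurable measurableSet_Ioc
    · exact (hcont.mono (fun y hy => lt_of_le_of_lt hc hy : Set.Ioi c ⊆ Set.Ioi 0)).aestronglyMeasurable measurableSet_Ioi
  have hbound : ∀ s : ℝ, 0 < s → 0 ≤ 1 - Real.exp (-(s*t)) ∧ 1 - Real.exp (-(s*t)) ≤ s*t := by
    intro s hs
    constructor
    · have : Real.exp (-(s*t)) ≤ 1 := by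
        rw [Real.exp_le_one_iff]
        nlinarith
      linarith
    · have := Real.add_one_le_exp (-(s*t))
      linarith
  have h01 : IntegrableOn (fun s => (1 - Real.exp (-(s*t))) * s ^ (-α-1)) (Set.Ioc (0:ℝ) 1) := by
    have hi : IntegrableOn (fun s : ℝ => t * s ^ (-α)) (Set.Ioc (0:ℝ) 1) := by
      have := intervalIntegral.intervalIntegrable_rpow' (a := 0) (b := 1)
        (r := -α) (by linarith)
      rw [intervalIntegrable_iff_integrableOn_Ioc_of_le (by norm_num)] at this
      exact this.const_mul t
    refine Integrable.mono' hi (hmeas 0 1 le_rfl).1 ?_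
    rw [ae_restrict_iff' measurableSet_Ioc]
    refine Filter.Eventually.of_forall fun s hs => ?_
    have hs0 : 0 < s := hs.1
    have hb := hbound s hs0
    have hrp : (0:ℝ) ≤ s ^ (-α-1) := Real.rpow_nonneg hs0.le _
    rw [Real.norm_eq_abs, abs_of_nonneg (mul_nonneg hb.1 hrp)]
    calc (1 - Real.exp (-(s*t))) * s ^ (-α-1) ≤ (s*t) * s ^ (-α-1) :=
          mul_le_mul_of_nonneg_right hb.2 hrp
      _ = t * (s ^ (-α-1) * s) := by ring
      _ = t * s ^ (-α) := by
          rw [← Real.rpow_add_one hs0.ne' (-α-1)]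
          norm_num
  have h1i : IntegrableOn (fun s => (1 - Real.exp (-(s*t))) * s ^ (-α-1)) (Set.Ioi (1:ℝ)) := by
    have hi : IntegrableOn (fun s : ℝ => s ^ (-α-1)) (Set.Ioi (1:ℝ)) :=
      integrableOn_Ioi_rpow_of_lt (by linarith) one_pos
    refine Integrable.mono' hi (hmeas 1 1 zero_le_one).2 ?_
    rw [ae_restrict_iff' measurableSet_Ioi]
    refine Filter.Eventually.of_forall fun s hs => ?_
    have hs0 : (0:ℝ) < s := lt_trans one_pos hs
    have hb := hbound s hs0
    have hrp : (0:ℝ) ≤ s ^ (-α-1) := Real.rpow_nonneg hs0.le _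
    rw [Real.norm_eq_abs, abs_of_nonneg (mul_nonneg hb.1 hrp)]
    have hle1 : 1 - Real.exp (-(s*t)) ≤ 1 := by
      have : 0 < Real.exp (-(s*t)) := Real.exp_pos _
      linarith
    calc (1 - Real.exp (-(s*t))) * s ^ (-α-1) ≤ 1 * s ^ (-α-1) :=
          mul_le_mul_of_nonneg_right hle1 hrp
      _ = s ^ (-α-1) := one_mul _
  have : Set.Ioi (0:ℝ) = Set.Ioc 0 1 ∪ Set.Ioi 1 := (Set.Ioc_union_Ioi_eq_Ioi (by norm_num)).symm
  rw [this]
  exact h01.union h1i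


open MeasureTheory in
lemma rpow_integral_rep {α : ℝ} (h0 : 0 < α) (h1 : α < 1) {t : ℝ} (ht : 0 ≤ t) :
    t ^ α * ∫ s in Set.Ioi (0:ℝ), (1 - Real.exp (-s)) * s ^ (-α-1)
      = ∫ s in Set.Ioi (0:ℝ), (1 - Real.exp (-(s*t))) * s ^ (-α-1) := by
  rcases eq_or_lt_of_le ht with rfl | htpos
  · simp [Real.zero_rpow h0.ne']
  set g : ℝ → ℝ := fun u => (1 - Real.exp (-u)) * u ^ (-α-1) with hg
  have step1 : ∫ s in Set.Ioi (0:ℝ), (1 - Real.exp (-(s*t))) * s ^ (-α-1)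
      = ∫ s in Set.Ioi (0:ℝ), t ^ (α+1) * g (t * s) := by
    refine setIntegral_congr_fun measurableSet_Ioi fun s hs => ?_
    have hs0 : (0:ℝ) < s := hs
    have hts : (0:ℝ) < t * s := mul_pos htpos hs0
    simp only [hg]
    rw [Real.mul_rpow htpos.le hs0.le]
    have htt : t ^ (α+1) * t ^ (-α-1) = 1 := by
      rw [← Real.rpow_add htpos]
      norm_num
    have : s * t = t * s := by ring
    rw [this]
    calc (1 - Real.exp (-(t*s))) * s ^ (-α-1)
        = (t ^ (α+1) * t ^ (-α-1)) * ((1 - Real.exp (-(t*s))) * s ^ (-α-1)) := by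
          rw [htt]; ring
      _ = t ^ (α+1) * ((1 - Real.exp (-(t*s))) * (t ^ (-α-1) * s ^ (-α-1))) := by ring
  rw [step1, MeasureTheory.integral_const_mul, integral_comp_mul_left_Ioi g 0 htpos, mul_zero]
  rw [smul_eq_mul]
  have : t ^ (α+1) * (t⁻¹ * ∫ s in Set.Ioi (0:ℝ), g s) = t ^ α * ∫ s in Set.Ioi (0:ℝ), g s := by
    rw [Real.rpow_add_one htpos.ne' α]
    field_simp
  rw [this]

open MeasureTheory in
lemma C_pos {α : ℝ} (h0 : 0 < α) (h1 : α < 1) :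
    0 < ∫ s in Set.Ioi (0:ℝ), (1 - Real.exp (-s)) * s ^ (-α-1) := by
  have hint : IntegrableOn (fun s => (1 - Real.exp (-s)) * s ^ (-α-1)) (Set.Ioi (0:ℝ)) := by
    have := integrable_kernel h0 h1 (t := 1) zero_le_one
    simpa using this
  have hnn : 0 ≤ᵐ[volume.restrict (Set.Ioi (0:ℝ))]
      fun s => (1 - Real.exp (-s)) * s ^ (-α-1) := by
    refine (ae_restrict_iff' measurableSet_Ioi).2 (Filter.Eventually.of_forall fun s hs => ?_)
    have hs0 : (0:ℝ) < s := hs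
    have h2 : Real.exp (-s) ≤ 1 := by rw [Real.exp_le_one_iff]; linarith
    exact mul_nonneg (by linarith) (Real.rpow_nonneg hs0.le _)
  rw [setIntegral_pos_iff_support_of_nonneg_ae hnn hint]
  have hsub : Set.Ioi (0:ℝ) ⊆ Function.support (fun s => (1 - Real.exp (-s)) * s ^ (-α-1))
      ∩ Set.Ioi 0 := by
    intro s hs
    have hs0 : (0:ℝ) < s := hs
    refine ⟨?_, hs⟩
    have h2 : Real.exp (-s) < 1 := by rw [Real.exp_lt_one_iff]; linarith
    have h3 : (0:ℝ) < s ^ (-α-1) := Real.rpow_pos_of_pos hs0 _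
    exact ne_of_gt (mul_pos (by linarith) h3)
  calc (0:ENNReal) < volume (Set.Ioi (0:ℝ)) := by simp [Real.volume_Ioi]
    _ ≤ volume _ := measure_mono hsub


open MeasureTheory in
lemma negtype_rpow {X : Type*} {ψ : X → X → ℝ} (hψnn : ∀ x y, 0 ≤ ψ x y)
    (h : IsNegTypeKernel' ψ) {α : ℝ} (h0 : 0 < α) (h1 : α < 1) :
    IsNegTypeKernel' (fun x y => ψ x y ^ α) := by
  obtain ⟨hdiag, hsymm, hq⟩ := h
  refine ⟨fun x => by simp [hdiag x, Real.zero_rpow h0.ne'],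
    fun x y => by simp [hsymm x y], ?_⟩
  intro n x lam hsum
  set C := ∫ s in Set.Ioi (0:ℝ), (1 - Real.exp (-s)) * s ^ (-α-1) with hC
  have hCpos : 0 < C := C_pos h0 h1
  -- integral representation of each term
  have hrep : ∀ t : ℝ, 0 ≤ t → t ^ α
      = C⁻¹ * ∫ s in Set.Ioi (0:ℝ), (1 - Real.exp (-(s*t))) * s ^ (-α-1) := by
    intro t ht
    rw [← rpow_integral_rep h0 h1 ht, ← hC]
    field_simp
  -- rewrite the quadratic form using the representation
  have main : ∑ i, ∑ j, lam i * lam j * ψ (x i) (x j) ^ α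
      = C⁻¹ * ∑ q : Fin n × Fin n, lam q.1 * lam q.2 *
          ∫ s in Set.Ioi (0:ℝ), (1 - Real.exp (-(s * ψ (x q.1) (x q.2)))) * s ^ (-α-1) := by
    have flat : ∑ q : Fin n × Fin n, lam q.1 * lam q.2 * ψ (x q.1) (x q.2) ^ α
        = ∑ i, ∑ j, lam i * lam j * ψ (x i) (x j) ^ α := by
      rw [Fintype.sum_prod_type]
    rw [← flat, Finset.mul_sum]
    refine Finset.sum_congr rfl fun q _ => ?_
    rw [hrep (ψ (x q.1) (x q.2)) (hψnn _ _)]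
    ring
  rw [main]
  have hT : ∑ q : Fin n × Fin n, lam q.1 * lam q.2 *
      ∫ s in Set.Ioi (0:ℝ), (1 - Real.exp (-(s * ψ (x q.1) (x q.2)))) * s ^ (-α-1) ≤ 0 := by
    have hint : ∀ q : Fin n × Fin n, Integrable
        (fun s => lam q.1 * lam q.2 * ((1 - Real.exp (-(s * ψ (x q.1) (x q.2)))) * s ^ (-α-1)))
        (volume.restrict (Set.Ioi (0:ℝ))) :=
      fun q => (integrable_kernel h0 h1 (hψnn (x q.1) (x q.2))).const_mul _
    have e1 : ∑ q : Fin n × Fin n, lam q.1 * lam q.2 *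
        ∫ s in Set.Ioi (0:ℝ), (1 - Real.exp (-(s * ψ (x q.1) (x q.2)))) * s ^ (-α-1)
        = ∫ s in Set.Ioi (0:ℝ), ∑ q : Fin n × Fin n, lam q.1 * lam q.2 *
            ((1 - Real.exp (-(s * ψ (x q.1) (x q.2)))) * s ^ (-α-1)) := by
      rw [integral_finset_sum _ fun q _ => hint q]
      exact Finset.sum_congr rfl fun q _ => (MeasureTheory.integral_const_mul _ _).symm
    rw [e1]
    refine integral_nonpos_of_ae ?_
    refine (ae_restrict_iff' measurableSet_Ioi).2 (Filter.Eventually.of_forall fun s hs => ?_)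
    have hs0 : (0:ℝ) < s := hs
    -- pointwise: the sum is -(PSD quadratic form) * s^(-α-1)
    have hpsd := negtype_exp_psd (ψ := ψ) ⟨hdiag, hsymm, hq⟩ x hs0.le lam
    have hE : 0 ≤ ∑ q : Fin n × Fin n,
        lam q.1 * lam q.2 * Real.exp (-(s * ψ (x q.1) (x q.2))) := by
      rw [Fintype.sum_prod_type]
      exact hpsd
    have hzero : ∑ q : Fin n × Fin n, lam q.1 * lam q.2 = 0 := by
      rw [Fintype.sum_prod_type]
      rw [← Finset.sum_mul_sum Finset.univ Finset.univ lam lam]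
      rw [hsum]
      ring
    have hrp : (0:ℝ) ≤ s ^ (-α-1) := Real.rpow_nonneg hs0.le _
    calc ∑ q : Fin n × Fin n, lam q.1 * lam q.2 *
          ((1 - Real.exp (-(s * ψ (x q.1) (x q.2)))) * s ^ (-α-1))
        = ∑ q : Fin n × Fin n, ((lam q.1 * lam q.2) * s ^ (-α-1)
            - (lam q.1 * lam q.2 * Real.exp (-(s * ψ (x q.1) (x q.2)))) * s ^ (-α-1)) :=
          Finset.sum_congr rfl fun q _ => by ring
      _ = (∑ q : Fin n × Fin n, lam q.1 * lam q.2) * s ^ (-α-1)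
          - (∑ q : Fin n × Fin n,
              lam q.1 * lam q.2 * Real.exp (-(s * ψ (x q.1) (x q.2)))) * s ^ (-α-1) := by
          rw [Finset.sum_sub_distrib, Finset.sum_mul, Finset.sum_mul]
      _ ≤ 0 := by
          rw [hzero]
          simp only [zero_mul, zero_sub, neg_nonpos]
          exact mul_nonneg hE hrp
  have := mul_nonpos_iff.2 (Or.inl ⟨(inv_nonneg.2 hCpos.le), hT⟩)
  exact this


theorem gr_interval' {X : Type*} [MetricSpace X] (p q : ℝ) (hp : 0 < p) (hpq : p ≤ q)
    (h : GRIneq' X q) : GRIneq' X p := by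
  rcases eq_or_lt_of_le hpq with rfl | hlt
  · exact h
  have hq0 : 0 < q := hp.trans hlt
  have hNT := GR_to_negtype hq0 h
  have hα0 : 0 < p / q := div_pos hp hq0
  have hα1 : p / q < 1 := (div_lt_one hq0).2 hlt
  have hNTp := negtype_rpow (fun x y => Real.rpow_nonneg dist_nonneg q) hNT hα0 hα1
  have heq : (fun x y : X => (dist x y ^ q) ^ (p/q)) = fun x y : X => dist x y ^ p := by
    funext x y
    rw [← Real.rpow_mul dist_nonneg, mul_comm, div_mul_cancel₀ p hq0.ne']
  rw [heq] at hNTp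
  exact negtype_to_GR hp hNTp

end GRAux


/-- If the generalized roundness inequality holds for exponent q, it holds for every
exponent p with 0 < p ≤ q. -/
theorem gr_interval {X : Type*} [MetricSpace X] (p q : ℝ) (hp : 0 < p) (hpq : p ≤ q)
    (h : GRIneq X q) : GRIneq X p := by
  exact GRAux.gr_interval' p q hp hpq h

end Aux
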